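/- Let R > 0, let μ be a probability measure on ℝ supported in [−R, R], let δ > 0, and let p_δ be the density of μ * γ_δ. Then for every x ≥ R, ∫_x^∞ p_δ(t) dt ≤ (4/3) · (δ/(x − R + √δ)) · p_δ(x). -/

import Mathlib

open MeasureTheory Real Set Filter


lemma gauss_integrable {δ : ℝ} (hδ : 0 < δ) (s : ℝ) :
    Integrable (fun t : ℝ => Real.exp (-((t - s) ^ 2) / (2 * δ))) := by
  have heq : (fun t : ℝ => Real.exp (-((t - s) ^ 2) / (2 * δ)))
      = fun t : ℝ => Real.exp (-(2*δ)⁻¹ * (t - s) ^ 2) := by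
    funext t
    congr 1
    ring
  rw [heq]
  exact (integrable_exp_neg_mul_sq (show (0:ℝ) < (2*δ)⁻¹ by positivity)).comp_sub_right s

lemma tail_shift {δ : ℝ} (hδ : 0 < δ) {s x c : ℝ} (hc : 0 ≤ c) (hcx : c ≤ x - s) :
    ∫ t in Set.Ioi x, Real.exp (-((t - s) ^ 2) / (2 * δ)) ≤
      4 / 3 * (δ / (c + Real.sqrt δ)) * Real.exp (-((x - s) ^ 2) / (2 * δ)) := by
  set q := Real.sqrt δ with hqdef
  have hq : 0 < q := Real.sqrt_pos.mpr hδ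
  have hq2 : q ^ 2 = δ := Real.sq_sqrt hδ.le
  have hP : ∀ t : ℝ, x ≤ t → 0 < t - s + q := fun t ht => by nlinarith
  set H : ℝ → ℝ := fun u => 4/3*δ*((u - s + q)⁻¹ * Real.exp (-((u - s) ^ 2) / (2 * δ))) with hH
  set D : ℝ → ℝ := fun t => 4/3*δ*(Real.exp (-((t - s) ^ 2) / (2 * δ)) *
      (-((t-s+q)^2)⁻¹ - (t-s) * (δ*(t-s+q))⁻¹)) with hD
  have hderiv : ∀ t : ℝ, x ≤ t → HasDerivAt H (D t) t := by
    intro t ht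
    have h1 : HasDerivAt (fun u : ℝ => u - s + q) 1 t :=
      ((hasDerivAt_id t).sub_const s).add_const q
    have h2 : HasDerivAt (fun u : ℝ => (u - s + q)⁻¹) (-1/(t-s+q)^2) t := by
      simpa using h1.fun_inv (ne_of_gt (hP t ht))
    have h3 : HasDerivAt (fun u : ℝ => -((u - s) ^ 2) / (2 * δ))
        (-((2:ℕ) * (t - s) ^ 1 * 1) / (2*δ)) t :=
      ((((hasDerivAt_id t).sub_const s).pow 2).neg).div_const (2*δ)
    have h4 := h3.exp
    have h5 := (h2.mul h4).const_mul (4/3*δ : ℝ)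
    refine h5.congr_deriv ?_
    have hp := (hP t ht).ne'
    rw [hD]
    field_simp
    ring
  have hkey : ∀ t : ℝ, x ≤ t → Real.exp (-((t - s) ^ 2) / (2 * δ)) ≤ -D t := by
    intro t ht
    have hp := hP t ht
    have hident : -D t - Real.exp (-((t - s) ^ 2) / (2 * δ)) =
        Real.exp (-((t - s) ^ 2) / (2 * δ)) * (t - s - q)^2 / (3 * (t-s+q)^2) := by
      rw [hD]
      rw [show δ = q ^ 2 from hq2.symm]
      field_simp
      ring
    have hnn : 0 ≤ Real.exp (-((t - s) ^ 2) / (2 * δ)) * (t - s - q)^2 / (3 * (t-s+q)^2) := by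
      positivity
    linarith
  have hint := gauss_integrable hδ s
  have hB : ∀ B : ℝ, x ≤ B →
      ∫ t in x..B, Real.exp (-((t - s) ^ 2) / (2 * δ)) ≤ H x := by
    intro B hxB
    have hD_cont : ContinuousOn D (Set.Icc x B) := by
      rw [hD]
      apply ContinuousOn.mul continuousOn_const
      apply ContinuousOn.mul (Continuous.continuousOn (by fun_prop))
      apply ContinuousOn.sub
      · exact (ContinuousOn.inv₀ (Continuous.continuousOn (by fun_prop))
          fun t ht => pow_ne_zero 2 (ne_of_gt (hP t ht.1))).neg
      · exact (Continuous.continuousOn (by fun_prop)).mul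
          (ContinuousOn.inv₀ (Continuous.continuousOn (by fun_prop))
            fun t ht => mul_ne_zero hδ.ne' (ne_of_gt (hP t ht.1)))
    have hD_int : IntervalIntegrable D volume x B := by
      apply ContinuousOn.intervalIntegrable
      rwa [Set.uIcc_of_le hxB]
    have hftc : ∫ t in x..B, D t = H B - H x :=
      intervalIntegral.integral_eq_sub_of_hasDerivAt
        (fun t ht => hderiv t (by rw [Set.uIcc_of_le hxB] at ht; exact ht.1)) hD_int
    have hmono : ∫ t in x..B, Real.exp (-((t - s) ^ 2) / (2 * δ))
        ≤ ∫ t in x..B, -D t := by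
      apply intervalIntegral.integral_mono_on hxB hint.intervalIntegrable hD_int.neg
      intro t ht
      exact hkey t ht.1
    have hHB : 0 ≤ H B := by
      rw [hH]
      have := (hP B hxB).le
      have h4 : (0:ℝ) ≤ 4/3*δ := by positivity
      exact mul_nonneg h4 (mul_nonneg (inv_nonneg.mpr this) (Real.exp_pos _).le)
    calc ∫ t in x..B, Real.exp (-((t - s) ^ 2) / (2 * δ))
        ≤ ∫ t in x..B, -D t := hmono
      _ = -(H B - H x) := by rw [intervalIntegral.integral_neg, hftc]
      _ ≤ H x := by linarith
  have hlim := intervalIntegral_tendsto_integral_Ioi x hint.integrableOn tendsto_id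
  have hle : ∫ t in Set.Ioi x, Real.exp (-((t - s) ^ 2) / (2 * δ)) ≤ H x :=
    le_of_tendsto hlim (eventually_atTop.mpr ⟨x, fun B hxB => hB B hxB⟩)
  refine hle.trans ?_
  have h1 : 0 < c + q := by linarith
  have h2 : c + q ≤ x - s + q := by linarith
  have hrhs : 4 / 3 * (δ / (c + q)) * Real.exp (-((x - s) ^ 2) / (2 * δ))
      = 4/3*δ*((c+q)⁻¹ * Real.exp (-((x - s) ^ 2) / (2 * δ))) := by ring
  rw [hH, hrhs]
  have h4 : (0:ℝ) ≤ 4/3*δ := by positivity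
  exact mul_le_mul_of_nonneg_left
    (mul_le_mul_of_nonneg_right (inv_anti₀ h1 h2) (Real.exp_pos _).le) h4

/-- Density of the convolution μ * γ_δ on ℝ:
p_δ(t) = ∫ (2πδ)^{-1/2} exp(−(t−s)²/(2δ)) dμ(s). -/
noncomputable def pdelta (δ : ℝ) (μ : Measure ℝ) (t : ℝ) : ℝ :=
  ∫ s, (Real.sqrt (2 * π * δ))⁻¹ * Real.exp (-((t - s) ^ 2) / (2 * δ)) ∂μ

theorem stmt7 (R δ : ℝ) (hR : 0 < R) (hδ : 0 < δ)
    (μ : Measure ℝ) [IsProbabilityMeasure μ] (hsupp : μ (Set.Icc (-R) R)ᶜ = 0) :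
    ∀ x : ℝ, R ≤ x →
      ∫ t in Set.Ioi x, pdelta δ μ t ≤
        4 / 3 * (δ / (x - R + Real.sqrt δ)) * pdelta δ μ x := by
  intro x hx
  have hx0 : 0 ≤ x - R := by linarith
  set cK : ℝ := (Real.sqrt (2 * π * δ))⁻¹ with hcK
  have hπ : 0 < 2 * π * δ := by positivity
  have hcK0 : 0 < cK := by rw [hcK]; positivity
  set ν := volume.restrict (Set.Ioi x) with hν
  have haeμ : ∀ᵐ s ∂μ, s ∈ Set.Icc (-R) R := by
    rw [ae_iff]
    exact hsupp
  have h1 : (ν.prod μ) (((Set.Ioi x)ᶜ) ×ˢ (Set.univ : Set ℝ)) = 0 := by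
    rw [Measure.prod_prod, hν, Measure.restrict_apply measurableSet_Ioi.compl]
    simp [Set.Iic_inter_Ioi]
  have h2 : (ν.prod μ) ((Set.univ : Set ℝ) ×ˢ (Set.Icc (-R) R)ᶜ) = 0 := by
    rw [Measure.prod_prod, hsupp, mul_zero]
  have hae : ∀ᵐ z : ℝ × ℝ ∂ν.prod μ, z.1 ∈ Set.Ioi x ∧ z.2 ∈ Set.Icc (-R) R := by
    rw [ae_iff]
    refine measure_mono_null ?_ (measure_union_null h1 h2)
    intro z hz
    simp only [Set.mem_setOf_eq, not_and_or] at hz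
    rcases hz with h | h
    · exact Or.inl ⟨h, Set.mem_univ _⟩
    · exact Or.inr ⟨Set.mem_univ _, h⟩
  have hFc : Continuous (fun z : ℝ × ℝ => cK * Real.exp (-((z.1 - z.2) ^ 2) / (2 * δ))) := by
    fun_prop
  have hgint : Integrable
      (fun z : ℝ × ℝ => (cK * Real.exp (-((z.1 - R) ^ 2) / (2 * δ))) * 1) (ν.prod μ) := by
    exact Integrable.mul_prod (L := ℝ)
      ((gauss_integrable hδ R).const_mul cK).integrableOn (integrable_const 1)
  have hFint : Integrable
      (Function.uncurry fun t s : ℝ => cK * Real.exp (-((t - s) ^ 2) / (2 * δ))) (ν.prod μ) := by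
    apply Integrable.mono' hgint hFc.aestronglyMeasurable
    filter_upwards [hae] with z hz
    obtain ⟨t, s⟩ := z
    have hz1 : x < t := hz.1
    have hz2 : s ≤ R := hz.2.2
    simp only [Function.uncurry_apply_pair]
    rw [Real.norm_eq_abs, abs_of_nonneg (by positivity), mul_one]
    apply mul_le_mul_of_nonneg_left _ hcK0.le
    apply Real.exp_le_exp.mpr
    apply (div_le_div_iff_of_pos_right (by positivity)).mpr
    nlinarith
  have hswap := MeasureTheory.integral_integral_swap hFint
  have hinner : ∀ᵐ s ∂μ, (∫ t in Set.Ioi x, cK * Real.exp (-((t - s) ^ 2) / (2 * δ)))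
      ≤ 4 / 3 * (δ / (x - R + Real.sqrt δ)) * (cK * Real.exp (-((x - s) ^ 2) / (2 * δ))) := by
    filter_upwards [haeμ] with s hs
    rw [MeasureTheory.integral_const_mul]
    have ht := tail_shift hδ hx0 (show x - R ≤ x - s by linarith [hs.2])
    calc cK * ∫ t in Set.Ioi x, Real.exp (-((t - s) ^ 2) / (2 * δ))
        ≤ cK * (4 / 3 * (δ / (x - R + Real.sqrt δ)) * Real.exp (-((x - s) ^ 2) / (2 * δ))) :=
          mul_le_mul_of_nonneg_left ht hcK0.le
      _ = 4 / 3 * (δ / (x - R + Real.sqrt δ)) * (cK * Real.exp (-((x - s) ^ 2) / (2 * δ))) := by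
          ring
  have hxint : Integrable (fun s => cK * Real.exp (-((x - s) ^ 2) / (2 * δ))) μ := by
    apply Integrable.mono' (integrable_const cK)
      (Continuous.aestronglyMeasurable (by fun_prop))
    refine Filter.Eventually.of_forall fun s => ?_
    rw [Real.norm_eq_abs, abs_of_nonneg (by positivity)]
    nth_rewrite 2 [show cK = cK * 1 by ring]
    apply mul_le_mul_of_nonneg_left _ hcK0.le
    rw [← Real.exp_zero]
    apply Real.exp_le_exp.mpr
    apply div_nonpos_of_nonpos_of_nonneg _ (by positivity)
    simp [sq_nonneg]
  have hmono := MeasureTheory.integral_mono_ae hFint.integral_prod_right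
    (hxint.const_mul (4 / 3 * (δ / (x - R + Real.sqrt δ)))) hinner
  calc ∫ t in Set.Ioi x, pdelta δ μ t
      = ∫ s, ∫ t in Set.Ioi x, cK * Real.exp (-((t - s) ^ 2) / (2 * δ)) ∂volume ∂μ := hswap
    _ ≤ ∫ s, 4 / 3 * (δ / (x - R + Real.sqrt δ)) * (cK * Real.exp (-((x - s) ^ 2) / (2 * δ))) ∂μ :=
        hmono
    _ = 4 / 3 * (δ / (x - R + Real.sqrt δ)) * pdelta δ μ x := by
        rw [MeasureTheory.integral_const_mul]
        rfl
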